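/- Let x¹,…,x^d ∈ C¹([0,T],ℝ) and define iterated integrals recursively by 𝒥(dx^{i})_{ts} = x^i_t − x^i_s and 𝒥(dx^{i_1}⋯dx^{i_n})_{ts} = ∫_s^t 𝒥(dx^{i_2}⋯dx^{i_n})_{us} dx^{i_1}_u. Then Chen's multiplicative property holds: δ𝒥(dx^{i_1}⋯dx^{i_n})_{tus} = Σ_{k=1}^{n−1} 𝒥(dx^{i_1}⋯dx^{i_k})_{tu} · 𝒥(dx^{i_{k+1}}⋯dx^{i_n})_{us} for all s,u,t ∈ [0,T] and all multi-indices (i_1,…,i_n) ∈ {1,…,d}^n. -/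
import Mathlib


/-- Iterated integrals of the C¹ paths `x i`:
`𝒥(dx^{i₁}⋯dx^{iₙ})_{ts} = ∫_s^t 𝒥(dx^{i₂}⋯dx^{iₙ})_{us} dx^{i₁}_u`,
with `𝒥` of the empty word equal to `1`. -/
noncomputable def J (d : ℕ) (x : Fin d → ℝ → ℝ) : List (Fin d) → ℝ → ℝ → ℝ
  | [], _, _ => 1
  | i :: is, t, s => ∫ u in s..t, deriv (x i) u * J d x is u s

lemma J_cons (d : ℕ) (x : Fin d → ℝ → ℝ) (i : Fin d) (is : List (Fin d)) (t s : ℝ) :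
    J d x (i :: is) t s = ∫ u in s..t, deriv (x i) u * J d x is u s := by
  rw [J]

lemma J_cont (d : ℕ) (x : Fin d → ℝ → ℝ) (hx : ∀ i, ContDiff ℝ 1 (x i)) :
    ∀ (v : List (Fin d)) (s : ℝ), Continuous fun t => J d x v t s
  | [], s => by simpa [J] using continuous_const
  | i :: is, s => by
    have h1 : Continuous fun r => deriv (x i) r * J d x is r s :=
      ((hx i).continuous_deriv le_rfl).mul (J_cont d x hx is s)
    have := intervalIntegral.continuous_primitive (μ := MeasureTheory.volume) (fun a b => h1.intervalIntegrable a b) s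
    simpa [J_cons] using this

lemma chen_aux (d : ℕ) (x : Fin d → ℝ → ℝ) (hx : ∀ i, ContDiff ℝ 1 (x i)) :
    ∀ (l : List (Fin d)) (i : Fin d) (s u t : ℝ),
      J d x (i :: l) t s - J d x (i :: l) t u - J d x (i :: l) u s
        = ∑ k ∈ Finset.Ico 1 (i :: l).length,
            J d x ((i :: l).take k) t u * J d x ((i :: l).drop k) u s := by
  intro l
  induction l with
  | nil =>
    intro i s u t
    have h : Continuous fun r => deriv (x i) r * J d x [] r s :=
      ((hx i).continuous_deriv le_rfl).mul (J_cont d x hx [] s)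
    have hadd := intervalIntegral.integral_add_adjacent_intervals
      (μ := MeasureTheory.volume) (h.intervalIntegrable s u) (h.intervalIntegrable u t)
    have hsu : ∀ r : ℝ, J d x [] r s = J d x [] r u := fun r => rfl
    simp only [List.length_cons, List.length_nil, Finset.Ico_self, Finset.sum_empty,
      J_cons]
    simp only [show (fun r => deriv (x i) r * J d x [] r u)
        = fun r => deriv (x i) r * J d x [] r s from by funext r; rw [hsu]]
    linarith
  | cons j m ih =>
    intro i s u t
    have hg : Continuous (deriv (x i)) := (hx i).continuous_deriv le_rfl
    have hc : ∀ (v : List (Fin d)) (a : ℝ),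
        Continuous fun r => deriv (x i) r * J d x v r a :=
      fun v a => hg.mul (J_cont d x hx v a)
    -- Step 1: δJ = ∫_u^t g r * (J(j::m) r s - J(j::m) r u)
    have key : J d x (i :: j :: m) t s - J d x (i :: j :: m) t u - J d x (i :: j :: m) u s
        = ∫ r in u..t, deriv (x i) r * (J d x (j :: m) r s - J d x (j :: m) r u) := by
      rw [J_cons, J_cons, J_cons,
        ← intervalIntegral.integral_add_adjacent_intervals
          ((hc (j :: m) s).intervalIntegrable s u) ((hc (j :: m) s).intervalIntegrable u t)]
      have : (fun r => deriv (x i) r * (J d x (j :: m) r s - J d x (j :: m) r u))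
          = fun r => deriv (x i) r * J d x (j :: m) r s
              - deriv (x i) r * J d x (j :: m) r u := by
        funext r; ring
      rw [this, intervalIntegral.integral_sub
        ((hc (j :: m) s).intervalIntegrable u t) ((hc (j :: m) u).intervalIntegrable u t)]
      ring
    -- Step 2: rewrite integrand with the induction hypothesis
    have key2 : (fun r => deriv (x i) r * (J d x (j :: m) r s - J d x (j :: m) r u))
        = fun r => deriv (x i) r * J d x (j :: m) u s
            + ∑ k ∈ Finset.Ico 1 (j :: m).length,
                (deriv (x i) r * J d x ((j :: m).take k) r u) * J d x ((j :: m).drop k) u s := by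
      funext r
      have h := ih j s u r
      have h2 : J d x (j :: m) r s - J d x (j :: m) r u
          = J d x (j :: m) u s + ∑ k ∈ Finset.Ico 1 (j :: m).length,
              J d x ((j :: m).take k) r u * J d x ((j :: m).drop k) u s := by linarith
      rw [h2, mul_add, Finset.mul_sum]
      congr 1
      exact Finset.sum_congr rfl fun k _ => by ring
    rw [key, key2]
    -- Step 3: compute the integral of the sum
    have hint1 : IntervalIntegrable (fun r => deriv (x i) r * J d x (j :: m) u s)
        MeasureTheory.volume u t := (hg.mul continuous_const).intervalIntegrable u t
    have hintk : ∀ k ∈ Finset.Ico 1 (j :: m).length,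
        IntervalIntegrable
          (fun r => (deriv (x i) r * J d x ((j :: m).take k) r u) * J d x ((j :: m).drop k) u s)
          MeasureTheory.volume u t :=
      fun k _ => ((hc _ u).mul continuous_const).intervalIntegrable u t
    have hsumc : Continuous (fun r => ∑ k ∈ Finset.Ico 1 (j :: m).length,
        (deriv (x i) r * J d x ((j :: m).take k) r u) * J d x ((j :: m).drop k) u s) :=
      continuous_finset_sum _ (fun k _ => (hc _ u).mul continuous_const)
    rw [intervalIntegral.integral_add hint1 (hsumc.intervalIntegrable u t),
      intervalIntegral.integral_finset_sum hintk]
    have e1 : (∫ r in u..t, deriv (x i) r * J d x (j :: m) u s)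
        = J d x [i] t u * J d x (j :: m) u s := by
      rw [intervalIntegral.integral_mul_const, J_cons]
      simp [J]
    have e2 : ∀ k, (∫ r in u..t,
          (deriv (x i) r * J d x ((j :: m).take k) r u) * J d x ((j :: m).drop k) u s)
        = J d x (i :: (j :: m).take k) t u * J d x ((j :: m).drop k) u s := by
      intro k
      rw [intervalIntegral.integral_mul_const, J_cons]
    simp only [e1, e2]
    -- Step 4: reindex the sums
    rw [Finset.sum_Ico_eq_sum_range, Finset.sum_Ico_eq_sum_range]
    simp only [List.length_cons]
    rw [show m.length + 1 + 1 - 1 = m.length + 1 from rfl,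
      show m.length + 1 - 1 = m.length from rfl,
      Finset.sum_range_succ', add_comm]
    congr 1

/-- Chen's multiplicative property:
`δ𝒥(dx^{i₁}⋯dx^{iₙ})_{tus} = ∑_{k=1}^{n−1} 𝒥(dx^{i₁}⋯dx^{i_k})_{tu} 𝒥(dx^{i_{k+1}}⋯dx^{iₙ})_{us}`. -/
theorem chen_multiplicative_property (d : ℕ) (x : Fin d → ℝ → ℝ)
    (hx : ∀ i, ContDiff ℝ 1 (x i)) (T : ℝ)
    (i : Fin d) (l : List (Fin d)) :
    ∀ s ∈ Set.Icc (0 : ℝ) T, ∀ u ∈ Set.Icc (0 : ℝ) T, ∀ t ∈ Set.Icc (0 : ℝ) T,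
      J d x (i :: l) t s - J d x (i :: l) t u - J d x (i :: l) u s
        = ∑ k ∈ Finset.Ico 1 (i :: l).length,
            J d x ((i :: l).take k) t u * J d x ((i :: l).drop k) u s := by
  intro s _ u _ t _
  exact chen_aux d x hx l i s u t
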